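/- Let Ω ⊆ ℝⁿ be measurable, let p : Ω → [1,∞) be bounded measurable, let r : Ω → ℝ be bounded measurable with r(x) < 0 for all x ∈ Ω, and let a ∈ L^∞(Ω) with a ≥ 0. Then for every measurable set A ⊆ Ω with 0 < |A| < ∞: min{ |A|^{1/p⁺_A}, |A|^{1/p⁻_A} } ≤ ‖1_A‖_{L^Φ(Ω)} ≤ 2 (1+‖a‖_∞)^{1/p⁻_A} · max{ |A|^{1/p⁺_A}, |A|^{1/p⁻_A} }. -/

import Mathlib

open MeasureTheory Set
open scoped ENNReal

/-- The function `Φ(x,t) = t^{p(x)} + a(x) t^{p(x)} (log(e+t))^{r(x)}`. -/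
noncomputable def Phi2 {n : ℕ} (p r a : EuclideanSpace ℝ (Fin n) → ℝ)
    (x : EuclideanSpace ℝ (Fin n)) (t : ℝ) : ℝ :=
  t ^ p x + a x * t ^ p x * (Real.log (Real.exp 1 + t)) ^ r x

/-- The Luxemburg (quasi-)norm `‖u‖_{L^Φ(Ω)} = inf{λ > 0 : ∫_Ω Φ(x,|u(x)|/λ) dx ≤ 1}`,
valued in `ℝ≥0∞`, with `inf ∅ = ∞`. -/
noncomputable def luxNorm {n : ℕ} (Ω : Set (EuclideanSpace ℝ (Fin n)))
    (Φ : EuclideanSpace ℝ (Fin n) → ℝ → ℝ)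
    (u : EuclideanSpace ℝ (Fin n) → ℝ) : ℝ≥0∞ :=
  sInf ((fun l : ℝ => ENNReal.ofReal l) ''
    {l : ℝ | 0 < l ∧ (∫⁻ x in Ω, ENNReal.ofReal (Φ x (|u x| / l))) ≤ 1})

/-- two-sided estimate for the Luxemburg norm of an indicator when
`r < 0` everywhere:
`min{|A|^{1/p⁺_A}, |A|^{1/p⁻_A}} ≤ ‖1_A‖_{L^Φ(Ω)} ≤ 2(1+‖a‖_∞)^{1/p⁻_A} ·
max{|A|^{1/p⁺_A}, |A|^{1/p⁻_A}}`. -/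
theorem stmt_13 {n : ℕ}
    (Ω : Set (EuclideanSpace ℝ (Fin n))) (hΩm : MeasurableSet Ω)
    (p r a : EuclideanSpace ℝ (Fin n) → ℝ)
    (hpm : Measurable p) (hp1 : ∀ x ∈ Ω, 1 ≤ p x) (hpB : BddAbove (p '' Ω))
    (hrm : Measurable r) (hr0 : ∀ x ∈ Ω, r x < 0)
    (hrB : BddAbove (r '' Ω)) (hrb : BddBelow (r '' Ω))
    (ham : Measurable a) (ha0 : ∀ x ∈ Ω, 0 ≤ a x) (haB : BddAbove (a '' Ω)) :
    ∀ A : Set (EuclideanSpace ℝ (Fin n)), A ⊆ Ω → MeasurableSet A →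
      0 < volume A → volume A < ⊤ →
      min (ENNReal.ofReal ((volume A).toReal ^ (1 / sSup (p '' A))))
          (ENNReal.ofReal ((volume A).toReal ^ (1 / sInf (p '' A)))) ≤
        luxNorm Ω (Phi2 p r a) (A.indicator 1) ∧
      luxNorm Ω (Phi2 p r a) (A.indicator 1) ≤
        ENNReal.ofReal (2 * (1 + sSup (a '' Ω)) ^ (1 / sInf (p '' A)) *
          max ((volume A).toReal ^ (1 / sSup (p '' A)))
              ((volume A).toReal ^ (1 / sInf (p '' A)))) := by
  intro A hA hAm hA0 hAfin
  classical
  set m := (volume A).toReal with hm_def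
  have hm : 0 < m := ENNReal.toReal_pos hA0.ne' hAfin.ne
  have hAne : A.Nonempty := nonempty_of_measure_ne_zero hA0.ne'
  obtain ⟨x0, hx0⟩ := hAne
  set pI := sInf (p '' A) with hpI_def
  set pS := sSup (p '' A) with hpS_def
  have hpAbdd : BddAbove (p '' A) := hpB.mono (Set.image_mono hA)
  have hpAbddB : BddBelow (p '' A) := ⟨1, by
    rintro y ⟨x, hx, rfl⟩; exact hp1 x (hA hx)⟩
  have hpIne : (p '' A).Nonempty := ⟨p x0, ⟨x0, hx0, rfl⟩⟩
  have h1pI : 1 ≤ pI := le_csInf hpIne (by rintro y ⟨x, hx, rfl⟩; exact hp1 x (hA hx))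
  have hpI_le : ∀ x ∈ A, pI ≤ p x := fun x hx => csInf_le hpAbddB ⟨x, hx, rfl⟩
  have hle_pS : ∀ x ∈ A, p x ≤ pS := fun x hx => le_csSup hpAbdd ⟨x, hx, rfl⟩
  have h1pS : 1 ≤ pS := le_trans (hp1 x0 (hA hx0)) (hle_pS x0 hx0)
  have hpIS : pI ≤ pS := (hpI_le x0 hx0).trans (hle_pS x0 hx0)
  have hpIpos : 0 < pI := lt_of_lt_of_le one_pos h1pI
  have hpSpos : 0 < pS := lt_of_lt_of_le one_pos h1pS
  set S := sSup (a '' Ω) with hS_def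
  have hS0 : 0 ≤ S := le_trans (ha0 x0 (hA hx0)) (le_csSup haB ⟨x0, hA hx0, rfl⟩)
  have ha_le : ∀ x ∈ Ω, a x ≤ S := fun x hx => le_csSup haB ⟨x, hx, rfl⟩
  have hlog : ∀ t : ℝ, 0 ≤ t → 1 ≤ Real.log (Real.exp 1 + t) := by
    intro t ht
    calc (1:ℝ) = Real.log (Real.exp 1) := (Real.log_exp 1).symm
    _ ≤ Real.log (Real.exp 1 + t) := by
        apply Real.log_le_log (Real.exp_pos 1); linarith
  have hPhi_lb : ∀ x ∈ Ω, ∀ t : ℝ, 0 ≤ t → t ^ p x ≤ Phi2 p r a x t := by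
    intro x hx t ht
    have h1 : 0 ≤ a x * t ^ p x * Real.log (Real.exp 1 + t) ^ r x :=
      mul_nonneg (mul_nonneg (ha0 x hx) (Real.rpow_nonneg ht _))
        (Real.rpow_nonneg (le_trans zero_le_one (hlog t ht)) _)
    simp only [Phi2]; linarith
  have hPhi_ub : ∀ x ∈ Ω, ∀ t : ℝ, 0 ≤ t → Phi2 p r a x t ≤ (1 + S) * t ^ p x := by
    intro x hx t ht
    have hL : Real.log (Real.exp 1 + t) ^ r x ≤ 1 :=
      Real.rpow_le_one_of_one_le_of_nonpos (hlog t ht) (hr0 x hx).le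
    have htp : 0 ≤ t ^ p x := Real.rpow_nonneg ht _
    have h2 : a x * t ^ p x * Real.log (Real.exp 1 + t) ^ r x ≤ S * t ^ p x := by
      calc a x * t ^ p x * Real.log (Real.exp 1 + t) ^ r x
          ≤ a x * t ^ p x * 1 :=
            mul_le_mul_of_nonneg_left hL (mul_nonneg (ha0 x hx) htp)
      _ = a x * t ^ p x := mul_one _
      _ ≤ S * t ^ p x := mul_le_mul_of_nonneg_right (ha_le x hx) htp
    have h3 : (1 + S) * t ^ p x = t ^ p x + S * t ^ p x := by ring
    simp only [Phi2]; linarith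
  have hPhi0 : ∀ x ∈ Ω, Phi2 p r a x 0 = 0 := by
    intro x hx
    have hp0 : p x ≠ 0 := by have := hp1 x hx; linarith
    simp [Phi2, Real.zero_rpow hp0]
  -- integral identity
  have hI : ∀ l : ℝ, 0 < l →
      (∫⁻ x in Ω, ENNReal.ofReal (Phi2 p r a x (|A.indicator 1 x| / l))) =
      ∫⁻ x in A, ENNReal.ofReal (Phi2 p r a x (1 / l)) := by
    intro l hl
    have heq : ∀ x ∈ Ω, ENNReal.ofReal (Phi2 p r a x (|A.indicator 1 x| / l)) =
        A.indicator (fun x => ENNReal.ofReal (Phi2 p r a x (1 / l))) x := by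
      intro x hx
      by_cases hxA : x ∈ A
      · simp [Set.indicator_of_mem hxA]
      · simp [Set.indicator_of_notMem hxA, hPhi0 x hx]
    rw [setLIntegral_congr_fun hΩm heq,
      lintegral_indicator hAm, Measure.restrict_restrict hAm,
      Set.inter_eq_self_of_subset_left hA]
  -- generic integral bounds
  have hIub : ∀ c : ℝ, ∀ l : ℝ, (∀ x ∈ A, Phi2 p r a x (1 / l) ≤ c) →
      (∫⁻ x in A, ENNReal.ofReal (Phi2 p r a x (1 / l))) ≤ ENNReal.ofReal (c * m) := by
    intro c l hc
    calc (∫⁻ x in A, ENNReal.ofReal (Phi2 p r a x (1 / l)))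
        ≤ ∫⁻ _ in A, ENNReal.ofReal c := by
          refine lintegral_mono_ae ((ae_restrict_iff' hAm).mpr (ae_of_all _ ?_))
          intro x hx; exact ENNReal.ofReal_le_ofReal (hc x hx)
    _ = ENNReal.ofReal c * volume A := setLIntegral_const A _
    _ = ENNReal.ofReal c * ENNReal.ofReal m := by rw [ENNReal.ofReal_toReal hAfin.ne]
    _ = ENNReal.ofReal (c * m) := (ENNReal.ofReal_mul' hm.le).symm
  have hIlb : ∀ c : ℝ, ∀ l : ℝ, (∀ x ∈ A, c ≤ Phi2 p r a x (1 / l)) →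
      ENNReal.ofReal (c * m) ≤ ∫⁻ x in A, ENNReal.ofReal (Phi2 p r a x (1 / l)) := by
    intro c l hc
    calc ENNReal.ofReal (c * m) = ENNReal.ofReal c * ENNReal.ofReal m :=
          ENNReal.ofReal_mul' hm.le
    _ = ENNReal.ofReal c * volume A := by rw [ENNReal.ofReal_toReal hAfin.ne]
    _ = ∫⁻ _ in A, ENNReal.ofReal c := (setLIntegral_const A _).symm
    _ ≤ _ := by
          refine lintegral_mono_ae ((ae_restrict_iff' hAm).mpr (ae_of_all _ ?_))
          intro x hx; exact ENNReal.ofReal_le_ofReal (hc x hx)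
  constructor
  · -- lower bound
    apply le_sInf
    rintro b ⟨l, ⟨hl, hint⟩, rfl⟩
    rw [hI l hl] at hint
    set q := if 1 ≤ l then pS else pI with hq_def
    have hq1 : 1 ≤ q := by rw [hq_def]; split <;> assumption
    have hqpos : 0 < q := lt_of_lt_of_le one_pos hq1
    have hpt : ∀ x ∈ A, (1 / l) ^ q ≤ Phi2 p r a x (1 / l) := by
      intro x hx
      refine le_trans ?_ (hPhi_lb x (hA hx) (1 / l) (by positivity))
      by_cases h1l : 1 ≤ l
      · rw [hq_def, if_pos h1l]
        exact Real.rpow_le_rpow_of_exponent_ge (by positivity)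
          (by rw [div_le_one hl]; exact h1l) (hle_pS x hx)
      · rw [hq_def, if_neg h1l]
        refine Real.rpow_le_rpow_of_exponent_le ?_ (hpI_le x hx)
        rw [le_div_iff₀ hl, one_mul]; linarith
    have key : (1 / l) ^ q * m ≤ 1 :=
      ENNReal.ofReal_le_one.mp (le_trans (hIlb _ l hpt) hint)
    have hlq : 0 < l ^ q := Real.rpow_pos_of_pos hl q
    have hml : m ≤ l ^ q := by
      rw [one_div, Real.inv_rpow hl.le] at key
      nlinarith [mul_inv_cancel₀ hlq.ne']
    have hmq : m ^ (1 / q) ≤ l := by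
      calc m ^ (1 / q) ≤ (l ^ q) ^ (1 / q) :=
            Real.rpow_le_rpow hm.le hml (by positivity)
      _ = l := by
            rw [← Real.rpow_mul hl.le, mul_one_div, div_self hqpos.ne', Real.rpow_one]
    by_cases h1l : 1 ≤ l
    · have hqe : q = pS := if_pos h1l
      exact le_trans (min_le_left _ _) (ENNReal.ofReal_le_ofReal (by rw [← hqe]; exact hmq))
    · have hqe : q = pI := if_neg h1l
      exact le_trans (min_le_right _ _) (ENNReal.ofReal_le_ofReal (by rw [← hqe]; exact hmq))
  · -- upper bound
    set M := max (m ^ (1 / pS)) (m ^ (1 / pI)) with hM_def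
    have hMpos : 0 < M := lt_of_lt_of_le (Real.rpow_pos_of_pos hm _) (le_max_left _ _)
    set l0 := 2 * (1 + S) ^ (1 / pI) * M with hl0_def
    have h1S : (1:ℝ) ≤ 1 + S := by linarith
    have hl0 : 0 < l0 := by positivity
    set q := if 1 ≤ l0 then pI else pS with hq_def
    have hq1 : 1 ≤ q := by rw [hq_def]; split <;> assumption
    have hqpos : 0 < q := lt_of_lt_of_le one_pos hq1
    have hqI : pI ≤ q := by
      rw [hq_def]; split
      · exact le_refl _
      · exact hpIS
    have hMq : m ≤ M ^ q := by
      have h1 : m ^ (1 / q) ≤ M := by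
        rw [hq_def]; split
        · exact le_max_right _ _
        · exact le_max_left _ _
      calc m = (m ^ (1 / q)) ^ q := by
            rw [← Real.rpow_mul hm.le, one_div, inv_mul_cancel₀ hqpos.ne', Real.rpow_one]
      _ ≤ M ^ q := Real.rpow_le_rpow (Real.rpow_nonneg hm.le _) h1 hqpos.le
    have hl0q : 2 * (1 + S) * m ≤ l0 ^ q := by
      have e1 : l0 ^ q = 2 ^ q * (1 + S) ^ (q / pI) * M ^ q := by
        rw [hl0_def, Real.mul_rpow (by positivity) hMpos.le,
          Real.mul_rpow (by norm_num) (by positivity),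
          ← Real.rpow_mul (by linarith : (0:ℝ) ≤ 1 + S), one_div, inv_mul_eq_div]
      have h2 : (2:ℝ) ≤ 2 ^ q := by
        calc (2:ℝ) = 2 ^ (1:ℝ) := (Real.rpow_one 2).symm
        _ ≤ 2 ^ q := Real.rpow_le_rpow_of_exponent_le one_le_two hq1
      have h3 : (1 + S) ≤ (1 + S) ^ (q / pI) := by
        calc (1 + S) = (1 + S) ^ (1:ℝ) := (Real.rpow_one _).symm
        _ ≤ (1 + S) ^ (q / pI) :=
            Real.rpow_le_rpow_of_exponent_le h1S ((one_le_div hpIpos).mpr hqI)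
      rw [e1]
      have := Real.rpow_nonneg hMpos.le q
      nlinarith [mul_le_mul h2 h3 (by linarith) (by positivity : (0:ℝ) ≤ 2 ^ q)]
    have hpt : ∀ x ∈ A, Phi2 p r a x (1 / l0) ≤ (1 + S) * (1 / l0) ^ q := by
      intro x hx
      refine le_trans (hPhi_ub x (hA hx) (1 / l0) (by positivity)) ?_
      refine mul_le_mul_of_nonneg_left ?_ (by linarith)
      rw [hq_def]; split
      next h1l =>
        exact Real.rpow_le_rpow_of_exponent_ge (by positivity)
          (by rw [div_le_one hl0]; exact h1l) (hpI_le x hx)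
      next h1l =>
        refine Real.rpow_le_rpow_of_exponent_le ?_ (hle_pS x hx)
        rw [le_div_iff₀ hl0, one_mul]; linarith
    have hreal : (1 + S) * (1 / l0) ^ q * m ≤ 1 := by
      have hlq : 0 < l0 ^ q := Real.rpow_pos_of_pos hl0 q
      have hinv : (1 / l0) ^ q ≤ 1 / (2 * (1 + S) * m) := by
        rw [one_div, Real.inv_rpow hl0.le, ← one_div]
        exact one_div_le_one_div_of_le (by positivity) hl0q
      calc (1 + S) * (1 / l0) ^ q * m ≤ (1 + S) * (1 / (2 * (1 + S) * m)) * m := by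
            refine mul_le_mul_of_nonneg_right (mul_le_mul_of_nonneg_left hinv (by linarith)) hm.le
      _ = 1 / 2 := by field_simp
      _ ≤ 1 := by norm_num
    have hint : (∫⁻ x in Ω, ENNReal.ofReal (Phi2 p r a x (|A.indicator 1 x| / l0))) ≤ 1 := by
      rw [hI l0 hl0]
      refine le_trans (hIub _ l0 hpt) ?_
      exact ENNReal.ofReal_le_one.mpr hreal
    exact sInf_le ⟨l0, ⟨hl0, hint⟩, rfl⟩
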